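/- arXiv:2210.09589 — 10 statements merged into one kernel-verified Lean document; each statement's English description precedes it below -/
import Mathlib

section
/- Let X ⊆ ℝ^n, f : ℝ^n → ℝ continuous, and ρ₁, ρ₂ > 0. If x* ∈ X is a local minimizer of x ↦ f(x) + ρ₁‖x‖₀ over X, then x* is also a local minimizer of x ↦ f(x) + ρ₂‖x‖₀ over X. -/
open Finset

noncomputable def norm0 {n : ℕ} (x : Fin n → ℝ) : ℝ :=
  ((Finset.univ.filter fun i => x i ≠ 0).card : ℝ)

theorem stmt4 {n : ℕ} (X : Set (Fin n → ℝ)) (f : (Fin n → ℝ) → ℝ)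
    (hf : Continuous f) (ρ₁ ρ₂ : ℝ) (hρ₁ : 0 < ρ₁) (hρ₂ : 0 < ρ₂)
    (xstar : Fin n → ℝ) (hx : xstar ∈ X)
    (hmin : IsLocalMinOn (fun x => f x + ρ₁ * norm0 x) X xstar) :
    IsLocalMinOn (fun x => f x + ρ₂ * norm0 x) X xstar := by
  have hB : ∀ᶠ x in nhdsWithin xstar X, f xstar - ρ₂ < f x := by
    apply Filter.Eventually.filter_mono nhdsWithin_le_nhds
    have : ContinuousAt f xstar := hf.continuousAt
    exact this.eventually (eventually_gt_nhds (by linarith))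
  have hC : ∀ᶠ x in nhdsWithin xstar X,
      ∀ i, xstar i ≠ 0 → x i ≠ 0 := by
    apply Filter.Eventually.filter_mono nhdsWithin_le_nhds
    have : ∀ i : Fin n, xstar i ≠ 0 → ∀ᶠ x in nhds xstar, x i ≠ 0 := by
      intro i hi
      have : ContinuousAt (fun x : Fin n → ℝ => x i) xstar :=
        (continuous_apply i).continuousAt
      exact this.eventually_ne hi
    have h2 : ∀ᶠ x in nhds xstar, ∀ i ∈ Finset.univ.filter (fun i => xstar i ≠ 0),
        x i ≠ 0 := by
      apply (Filter.eventually_all_finset _).2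
      intro i hi
      exact this i (by simpa using hi)
    filter_upwards [h2] with x hx2 i hi
    exact hx2 i (by simpa using hi)
  filter_upwards [hmin, hB, hC] with x h1 h2 h3
  have hcard : (Finset.univ.filter fun i => xstar i ≠ 0).card ≤
      (Finset.univ.filter fun i => x i ≠ 0).card := by
    apply Finset.card_le_card
    intro i hi
    simp only [Finset.mem_filter, Finset.mem_univ, true_and] at *
    exact h3 i hi
  rcases eq_or_lt_of_le hcard with heq | hlt
  · have hn : norm0 x = norm0 xstar := by
      simp [norm0, heq]
    simp only [hn] at h1 ⊢
    linarith
  · have hn : norm0 xstar + 1 ≤ norm0 x := by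
      have : (Finset.univ.filter fun i => xstar i ≠ 0).card + 1 ≤
          (Finset.univ.filter fun i => x i ≠ 0).card := hlt
      unfold norm0
      exact_mod_cast this
    nlinarith [hn]
end

section
/- Let X ⊆ ℝ^n, f continuous, ρ > 0. If x* is a local minimizer of x ↦ f(x) + ρ‖x‖₀ over X, then the pair (x*, y*), with y*_i = 1 for x*_i = 0 and y*_i = 0 otherwise, is a local minimizer of (x,y) ↦ f(x) + ρ(n - ∑_i y_i) over the feasible set {(x,y) : x ∈ X, x ∘ y = 0, y ≤ e}. -/
open Finset

lemma card_split {n : ℕ} (x : Fin n → ℝ) :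
    ((Finset.univ.filter fun i => x i = 0).card : ℝ) = (n : ℝ) - norm0 x := by
  have h := Finset.card_filter_add_card_filter_not
    (s := (Finset.univ : Finset (Fin n))) (p := fun i => x i = 0)
  simp only [Finset.card_univ, Fintype.card_fin] at h
  unfold norm0
  push_cast [← h]
  ring

lemma sum_le_aux {n : ℕ} (x y : Fin n → ℝ) (hxy : ∀ i, x i * y i = 0)
    (hle : ∀ i, y i ≤ 1) : norm0 x ≤ (n : ℝ) - ∑ i, y i := by
  have hsplit : ∑ i, y i =
      (∑ i ∈ Finset.univ.filter fun i => x i = 0, y i) +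
      ∑ i ∈ Finset.univ.filter fun i => ¬ x i = 0, y i :=
    (Finset.sum_filter_add_sum_filter_not _ _ _).symm
  have h2 : (∑ i ∈ Finset.univ.filter fun i => ¬ x i = 0, y i) = 0 := by
    apply Finset.sum_eq_zero
    intro i hi
    simp only [Finset.mem_filter] at hi
    rcases mul_eq_zero.mp (hxy i) with h | h
    · exact absurd h hi.2
    · exact h
  have h1 : (∑ i ∈ Finset.univ.filter fun i => x i = 0, y i) ≤
      ((Finset.univ.filter fun i => x i = 0).card : ℝ) := by
    calc (∑ i ∈ Finset.univ.filter fun i => x i = 0, y i)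
        ≤ ∑ _i ∈ Finset.univ.filter fun i => x i = 0, (1 : ℝ) :=
          Finset.sum_le_sum fun i _ => hle i
      _ = _ := by simp
  have : ∑ i, y i ≤ (n : ℝ) - norm0 x := by
    rw [hsplit, h2, add_zero, ← card_split x]; exact h1
  linarith

theorem stmt6 {n : ℕ} (X : Set (Fin n → ℝ)) (f : (Fin n → ℝ) → ℝ)
    (hf : Continuous f) (ρ : ℝ) (hρ : 0 < ρ)
    (xstar ystar : Fin n → ℝ)
    (hy : ystar = fun i => if xstar i = 0 then 1 else 0)
    (hmin : IsLocalMinOn (fun x => f x + ρ * norm0 x) X xstar) :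
    IsLocalMinOn (fun p : (Fin n → ℝ) × (Fin n → ℝ) => f p.1 + ρ * ((n : ℝ) - ∑ i, p.2 i))
      {p | p.1 ∈ X ∧ (∀ i, p.1 i * p.2 i = 0) ∧ ∀ i, p.2 i ≤ 1}
      (xstar, ystar) := by
  have hsumstar : ∑ i, ystar i = (n : ℝ) - norm0 xstar := by
    rw [hy, ← card_split xstar]
    simp [Finset.sum_boole]
  rw [IsLocalMinOn, IsMinFilter] at hmin ⊢
  obtain ⟨u, hu_open, hu_mem, hu⟩ := mem_nhdsWithin.mp hmin
  apply mem_nhdsWithin.mpr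
  refine ⟨Prod.fst ⁻¹' u, hu_open.preimage continuous_fst, hu_mem, ?_⟩
  rintro ⟨x, y⟩ ⟨hxu, hxX, hxy, hyle⟩
  have h1 : f xstar + ρ * norm0 xstar ≤ f x + ρ * norm0 x := hu ⟨hxu, hxX⟩
  have h2 : norm0 x ≤ (n : ℝ) - ∑ i, y i := sum_le_aux x y hxy hyle
  simp only [Set.mem_setOf_eq, hsumstar]
  nlinarith
end

section
/- Let X ⊆ ℝ^n, f continuous, ρ > 0, and let y* be defined by y*_i = 1 if x*_i = 0 and y*_i = 0 otherwise. If (x*, y*) is a local minimizer of (x,y) ↦ f(x) + ρ(n - ∑_i y_i) over {(x,y) : x ∈ X, x ∘ y = 0, y ≤ e}, then x* is a local minimizer of x ↦ f(x) + ρ‖x‖₀ over X. -/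
open Finset

theorem stmt7 {n : ℕ} (X : Set (Fin n → ℝ)) (f : (Fin n → ℝ) → ℝ)
    (hf : Continuous f) (ρ : ℝ) (hρ : 0 < ρ)
    (xstar ystar : Fin n → ℝ)
    (hy : ystar = fun i => if xstar i = 0 then 1 else 0)
    (hmin : IsLocalMinOn
      (fun p : (Fin n → ℝ) × (Fin n → ℝ) => f p.1 + ρ * ((n : ℝ) - ∑ i, p.2 i))
      {p | p.1 ∈ X ∧ (∀ i, p.1 i * p.2 i = 0) ∧ ∀ i, p.2 i ≤ 1}
      (xstar, ystar)) :
    IsLocalMinOn (fun x => f x + ρ * norm0 x) X xstar := by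
  classical
  set S : Set ((Fin n → ℝ) × (Fin n → ℝ)) :=
    {p | p.1 ∈ X ∧ (∀ i, p.1 i * p.2 i = 0) ∧ ∀ i, p.2 i ≤ 1} with hS
  have h1 : ∀ᶠ q in nhds (xstar, ystar), q ∈ S →
      f xstar + ρ * ((n : ℝ) - ∑ i, ystar i) ≤ f q.1 + ρ * ((n : ℝ) - ∑ i, q.2 i) :=
    eventually_nhdsWithin_iff.mp hmin
  have hc : Continuous fun x : Fin n → ℝ => ((x, ystar) : (Fin n → ℝ) × (Fin n → ℝ)) :=
    continuous_id.prodMk continuous_const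
  have h2 : ∀ᶠ x in nhds xstar, (x, ystar) ∈ S →
      f xstar + ρ * ((n : ℝ) - ∑ i, ystar i) ≤ f x + ρ * ((n : ℝ) - ∑ i, ystar i) :=
    (hc.tendsto xstar).eventually h1
  have h3 : ∀ᶠ x in nhds xstar, ∀ i, xstar i ≠ 0 → x i ≠ 0 := by
    refine Filter.eventually_all.mpr fun i => ?_
    by_cases h : xstar i = 0
    · exact Filter.Eventually.of_forall fun x h' => absurd h h'
    · exact (((continuous_apply i).tendsto xstar).eventually (eventually_ne_nhds h)).mono
        fun x hx _ => hx
  have h4 : ∀ᶠ x in nhds xstar, f xstar - ρ < f x :=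
    (hf.tendsto xstar).eventually (eventually_gt_nhds (by linarith))
  -- sum of ystar
  have hsum : ∑ i, ystar i = ((Finset.univ.filter fun i => xstar i = 0).card : ℝ) := by
    rw [hy]
    simp [Finset.sum_boole]
  have hcards : (Finset.univ.filter fun i => xstar i = 0).card
      + (Finset.univ.filter fun i => xstar i ≠ 0).card = n := by
    have := Finset.card_filter_add_card_filter_not
      (s := (Finset.univ : Finset (Fin n))) (p := fun i => xstar i = 0)
    simpa using this
  have hns : (n : ℝ) - ∑ i, ystar i = norm0 xstar := by
    rw [hsum, norm0]
    have : ((Finset.univ.filter fun i => xstar i = 0).card : ℝ)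
        + ((Finset.univ.filter fun i => xstar i ≠ 0).card : ℝ) = (n : ℝ) := by
      exact_mod_cast congrArg (Nat.cast : ℕ → ℝ) hcards
    linarith
  have key : ∀ᶠ x in nhds xstar, x ∈ X →
      f xstar + ρ * norm0 xstar ≤ f x + ρ * norm0 x := by
    filter_upwards [h2, h3, h4] with x h2 h3 h4 hX
    set A := (Finset.univ.filter fun i => xstar i ≠ 0) with hA
    set B := (Finset.univ.filter fun i => x i ≠ 0) with hB
    have hAB : A ⊆ B := fun i hi => by
      simp only [hA, hB, Finset.mem_filter, Finset.mem_univ, true_and] at *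
      exact h3 i hi
    by_cases hcard : B.card ≤ A.card
    · have hEq : A = B := Finset.eq_of_subset_of_card_le hAB hcard
      have hfeas : (x, ystar) ∈ S := by
        refine ⟨hX, ?_, ?_⟩
        · intro i
          rw [hy]
          by_cases h0 : xstar i = 0
          · have : i ∉ B := by
              rw [← hEq, hA]
              simp [h0]
            have : x i = 0 := by
              by_contra hne
              exact this (by simp [hB, hne])
            simp [this]
          · simp [h0]
        · intro i
          rw [hy]
          by_cases h0 : xstar i = 0 <;> simp [h0]
      have hnx : norm0 x = norm0 xstar := by
        rw [norm0, norm0, ← hA, ← hB, hEq]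
      have := h2 hfeas
      rw [hns] at this
      rw [hnx]
      exact this
    · have hlt : A.card < B.card := lt_of_not_ge hcard
      have hge : norm0 xstar + 1 ≤ norm0 x := by
        rw [norm0, norm0, ← hA, ← hB]
        exact_mod_cast hlt
      have hmul : ρ * (norm0 xstar + 1) ≤ ρ * norm0 x :=
        mul_le_mul_of_nonneg_left hge hρ.le
      linarith
  show ∀ᶠ x in nhdsWithin xstar X,
    (fun x => f x + ρ * norm0 x) xstar ≤ (fun x => f x + ρ * norm0 x) x
  exact eventually_nhdsWithin_iff.mpr key
end

section
/- Let X ⊆ ℝ^n, f continuous, ρ > 0, and y* defined by y*_i = 1 if x*_i = 0 and y*_i = 0 otherwise. Then x* is a local minimizer of x ↦ f(x) + ρ‖x‖₀ over X if and only if (x*, y*) is a local minimizer of (x,y) ↦ f(x) + (ρ/2)∑_i y_i(y_i - 2) over {(x,y) : x ∈ X, x ∘ y = 0}. -/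
open Finset

lemma norm0_le_of {n : ℕ} {x x' : Fin n → ℝ} (h : ∀ i, x i ≠ 0 → x' i ≠ 0) :
    norm0 x ≤ norm0 x' := by
  unfold norm0
  exact_mod_cast Finset.card_le_card (fun i hi => by
    simp only [Finset.mem_filter, Finset.mem_univ, true_and] at hi ⊢
    exact h i hi)

lemma norm0_eq_of {n : ℕ} {x x' : Fin n → ℝ} (h : ∀ i, x i ≠ 0 ↔ x' i ≠ 0) :
    norm0 x = norm0 x' := by
  unfold norm0
  congr 2
  exact Finset.filter_congr (fun i _ => by simpa using h i)

theorem stmt8 {n : ℕ} (X : Set (Fin n → ℝ)) (f : (Fin n → ℝ) → ℝ)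
    (hf : Continuous f) (ρ : ℝ) (hρ : 0 < ρ)
    (xstar ystar : Fin n → ℝ)
    (hy : ystar = fun i => if xstar i = 0 then 1 else 0) :
    IsLocalMinOn (fun x => f x + ρ * norm0 x) X xstar ↔
    IsLocalMinOn
      (fun p : (Fin n → ℝ) × (Fin n → ℝ) => f p.1 + (ρ / 2) * ∑ i, p.2 i * (p.2 i - 2))
      {p | p.1 ∈ X ∧ ∀ i, p.1 i * p.2 i = 0}
      (xstar, ystar) := by
  -- Key eventual facts
  have hA : ∀ᶠ x in nhds xstar, ∀ i, xstar i ≠ 0 → x i ≠ 0 := by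
    rw [Filter.eventually_all]
    intro i
    by_cases h : xstar i = 0
    · filter_upwards with x hx; exact absurd h hx
    · filter_upwards [((isOpen_ne (x := (0:ℝ))).preimage (continuous_apply i)).mem_nhds
        (show xstar ∈ (fun p : Fin n → ℝ => p i) ⁻¹' {y | y ≠ 0} from h)] with x hx _
      exact hx
  have hB : ∀ᶠ y in nhds ystar, ∀ i, xstar i = 0 → y i ≠ 0 := by
    rw [Filter.eventually_all]
    intro i
    by_cases h : xstar i = 0
    · have hys : ystar i ≠ 0 := by simp [hy, h]
      filter_upwards [((isOpen_ne (x := (0:ℝ))).preimage (continuous_apply i)).mem_nhds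
        (show ystar ∈ (fun p : Fin n → ℝ => p i) ⁻¹' {y | y ≠ 0} from hys)] with y hyy _
      exact hyy
    · filter_upwards with y hyy; exact absurd hyy h
  -- termwise sum inequality
  have hsum : ∀ y : Fin n → ℝ, (∀ i, xstar i ≠ 0 → y i = 0) →
      ∑ i, ystar i * (ystar i - 2) ≤ ∑ i, y i * (y i - 2) := by
    intro y hsupp
    apply Finset.sum_le_sum
    intro i _
    by_cases h : xstar i = 0
    · have : ystar i = 1 := by simp [hy, h]
      rw [this]
      nlinarith [sq_nonneg (y i - 1)]
    · have h1 : ystar i = 0 := by simp [hy, h]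
      have h2 : y i = 0 := hsupp i h
      rw [h1, h2]
  constructor
  · intro hmin
    rw [IsLocalMinOn, IsMinFilter, eventually_nhdsWithin_iff] at hmin ⊢
    rw [nhds_prod_eq]
    filter_upwards [(hmin.and hA).prod_mk hB] with p hp hpS
    obtain ⟨⟨hminp, hAp⟩, hBp⟩ := hp
    obtain ⟨hX, hfeas⟩ := hpS
    -- on the relevant neighborhood, supports agree
    have hzero : ∀ i, xstar i = 0 → p.1 i = 0 := by
      intro i hi
      have := hfeas i
      rcases mul_eq_zero.1 this with h | h
      · exact h
      · exact absurd h (hBp i hi)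
    have hy0 : ∀ i, xstar i ≠ 0 → p.2 i = 0 := by
      intro i hi
      rcases mul_eq_zero.1 (hfeas i) with h | h
      · exact absurd h (hAp i hi)
      · exact h
    have hnorm : norm0 p.1 = norm0 xstar := by
      apply norm0_eq_of
      intro i
      constructor
      · intro h hc; exact h (hzero i hc)
      · exact hAp i
    have hfle : f xstar ≤ f p.1 := by
      have := hminp hX
      rw [hnorm] at this
      linarith
    have := hsum p.2 hy0
    show f p.1 + ρ / 2 * ∑ i, p.2 i * (p.2 i - 2) ≥ _
    nlinarith
  · intro hmin
    rw [IsLocalMinOn, IsMinFilter, eventually_nhdsWithin_iff] at hmin ⊢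
    rw [nhds_prod_eq] at hmin
    rw [Filter.eventually_prod_iff] at hmin
    obtain ⟨pa, hpa, pb, hpb, hUV⟩ := hmin
    have hT : ∀ᶠ x in nhds xstar, f xstar - ρ < f x := by
      have : IsOpen {x : Fin n → ℝ | (fun _ => f xstar - ρ) x < f x} :=
        isOpen_lt continuous_const hf
      exact this.mem_nhds (by simp; linarith)
    filter_upwards [hpa, hA, hT] with x hxpa hxA hxT hxX
    by_cases hcase : ∀ i, xstar i = 0 → x i = 0
    · -- (x, ystar) is feasible and near (xstar, ystar)
      have hfeas : ∀ i, x i * ystar i = 0 := by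
        intro i
        by_cases h : xstar i = 0
        · rw [hcase i h]; ring
        · have : ystar i = 0 := by simp [hy, h]
          rw [this]; ring
      have := hUV hxpa (hpb.self_of_nhds) ⟨hxX, hfeas⟩
      simp only at this
      have hnorm : norm0 x = norm0 xstar := by
        apply norm0_eq_of
        intro i
        constructor
        · intro h hc; exact h (hcase i hc)
        · exact hxA i
      simp only [hnorm]
      linarith
    · -- strictly larger support
      push_neg at hcase
      obtain ⟨j, hj0, hjne⟩ := hcase
      have hcard : norm0 xstar + 1 ≤ norm0 x := by
        unfold norm0
        have hsub : insert j (Finset.univ.filter fun i => xstar i ≠ 0) ⊆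
            Finset.univ.filter fun i => x i ≠ 0 := by
          intro i hi
          simp only [Finset.mem_insert, Finset.mem_filter, Finset.mem_univ, true_and] at hi ⊢
          rcases hi with h | h
          · subst h; exact hjne
          · exact hxA i h
        have hjnot : j ∉ Finset.univ.filter fun i => xstar i ≠ 0 := by
          simp [hj0]
        have := Finset.card_le_card hsub
        rw [Finset.card_insert_of_notMem hjnot] at this
        exact_mod_cast this
      show f xstar + ρ * norm0 xstar ≤ f x + ρ * norm0 x
      have h1 : f xstar - ρ < f x := hxT
      nlinarith
end

section
/- Let X ⊆ ℝ^n, f continuous, ρ > 0. Then x* is a global minimizer of x ↦ f(x) + (ρ/2)‖x‖₀ over X if and only if there exists y* such that (x*, y*) is a global minimizer of (x,y) ↦ f(x) + (ρ/2)∑_i y_i(y_i - 2) over {(x,y) : x ∈ X, x ∘ y = 0}. -/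
open Finset

lemma norm0_card_eq {n : ℕ} (x : Fin n → ℝ) :
    ((Finset.univ.filter fun i => x i = 0).card : ℝ) = n - norm0 x := by
  have h := Finset.card_filter_add_card_filter_not (s := (Finset.univ : Finset (Fin n)))
    (p := fun i => x i = 0)
  simp only [Finset.card_univ, Fintype.card_fin] at h
  unfold norm0
  have : ((Finset.univ.filter fun i => x i = 0).card : ℝ)
      + ((Finset.univ.filter fun i => ¬ x i = 0).card : ℝ) = n := by exact_mod_cast congrArg Nat.cast h
  push_cast at this ⊢
  linarith

lemma key_lb {n : ℕ} (x y : Fin n → ℝ) (h : ∀ i, x i * y i = 0) :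
    norm0 x - n ≤ ∑ i, y i * (y i - 2) := by
  have hterm : ∀ i ∈ Finset.univ, (if x i = 0 then (-1:ℝ) else 0) ≤ y i * (y i - 2) := by
    intro i _
    by_cases hx : x i = 0
    · simp only [hx, if_true]
      nlinarith [sq_nonneg (y i - 1)]
    · have hy : y i = 0 := (mul_eq_zero.mp (h i)).resolve_left hx
      simp [hx, hy]
  have := Finset.sum_le_sum hterm
  have hsum : ∑ i, (if x i = 0 then (-1:ℝ) else 0)
      = -((Finset.univ.filter fun i => x i = 0).card : ℝ) := by
    rw [Finset.sum_ite, Finset.sum_const, Finset.sum_const]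
    simp
  rw [hsum, norm0_card_eq] at this
  linarith

lemma key_eq {n : ℕ} (x : Fin n → ℝ) :
    ∑ i, (if x i = 0 then (1:ℝ) else 0) * ((if x i = 0 then (1:ℝ) else 0) - 2)
      = norm0 x - n := by
  have : ∀ i, (if x i = 0 then (1:ℝ) else 0) * ((if x i = 0 then (1:ℝ) else 0) - 2)
      = (if x i = 0 then (-1:ℝ) else 0) := by
    intro i; by_cases hx : x i = 0 <;> simp [hx] <;> ring
  simp only [this]
  rw [Finset.sum_ite, Finset.sum_const, Finset.sum_const]
  push_cast
  have hc := norm0_card_eq x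
  simp only [nsmul_eq_mul] at *
  linarith

theorem stmt10 {n : ℕ} (X : Set (Fin n → ℝ)) (f : (Fin n → ℝ) → ℝ)
    (hf : Continuous f) (ρ : ℝ) (hρ : 0 < ρ) (xstar : Fin n → ℝ) :
    (xstar ∈ X ∧ ∀ x ∈ X, f xstar + (ρ / 2) * norm0 xstar ≤ f x + (ρ / 2) * norm0 x) ↔
    (∃ ystar : Fin n → ℝ,
      (xstar ∈ X ∧ (∀ i, xstar i * ystar i = 0)) ∧
      ∀ (x y : Fin n → ℝ), x ∈ X → (∀ i, x i * y i = 0) →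
        f xstar + (ρ / 2) * ∑ i, ystar i * (ystar i - 2) ≤
          f x + (ρ / 2) * ∑ i, y i * (y i - 2)) := by
  have hρ2 : 0 < ρ / 2 := by linarith
  constructor
  · rintro ⟨hxX, hmin⟩
    refine ⟨fun i => if xstar i = 0 then 1 else 0, ⟨hxX, ?_⟩, ?_⟩
    · intro i; by_cases hx : xstar i = 0 <;> simp [hx]
    · intro x y hx hxy
      rw [key_eq]
      have h1 := hmin x hx
      have h2 := key_lb x y hxy
      nlinarith
  · rintro ⟨ystar, ⟨hxX, hxy⟩, hmin⟩
    refine ⟨hxX, fun x hx => ?_⟩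
    have h1 := hmin x (fun i => if x i = 0 then 1 else 0) hx
      (by intro i; by_cases hxi : x i = 0 <;> simp [hxi])
    rw [key_eq] at h1
    have h2 := key_lb xstar ystar hxy
    nlinarith
end

section
/- Let f : ℝ^n → ℝ, g : ℝ^n → ℝ^m, h : ℝ^n → ℝ^p be continuously differentiable, ρ > 0, and define L^{SP}(x,λ,μ) = f(x) + λᵀg(x) + μᵀh(x). A point x* is S-stationary (i.e., there exist λ*, μ* with ∂L^{SP}/∂x_i(x*,λ*,μ*) = 0 for all i with x*_i ≠ 0, λ* ≥ 0, g(x*) ≤ 0, λ* ∘ g(x*) = 0, h(x*) = 0) if and only if there exist y*, γ* such that (x*, y*, λ*, μ*, γ*) satisfies the KKT conditions of SPOsq: ∇ₓL^{SP}(x*,λ*,μ*) + γ* ∘ y* = 0, ρ(y* - e) + γ* ∘ x* = 0, λ* ≥ 0, g(x*) ≤ 0, λ* ∘ g(x*) = 0, h(x*) = 0, x* ∘ y* = 0. -/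
open Finset

noncomputable def LSP {n m p : ℕ} (f : (Fin n → ℝ) → ℝ)
    (g : (Fin n → ℝ) → Fin m → ℝ) (h : (Fin n → ℝ) → Fin p → ℝ)
    (lam : Fin m → ℝ) (mu : Fin p → ℝ) (x : Fin n → ℝ) : ℝ :=
  f x + ∑ j, lam j * g x j + ∑ j, mu j * h x j

theorem stmt13 {n m p : ℕ} (f : (Fin n → ℝ) → ℝ)
    (g : (Fin n → ℝ) → Fin m → ℝ) (h : (Fin n → ℝ) → Fin p → ℝ)
    (hf : ContDiff ℝ 1 f) (hg : ∀ j, ContDiff ℝ 1 (fun x => g x j))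
    (hh : ∀ j, ContDiff ℝ 1 (fun x => h x j))
    (ρ : ℝ) (hρ : 0 < ρ) (xstar : Fin n → ℝ) (lam : Fin m → ℝ) (mu : Fin p → ℝ) :
    ((∀ i, xstar i ≠ 0 → fderiv ℝ (LSP f g h lam mu) xstar (Pi.single i 1) = 0) ∧
      (∀ j, 0 ≤ lam j) ∧ (∀ j, g xstar j ≤ 0) ∧ (∀ j, lam j * g xstar j = 0) ∧
      (∀ j, h xstar j = 0)) ↔
    (∃ ystar γstar : Fin n → ℝ,
      (∀ i, fderiv ℝ (LSP f g h lam mu) xstar (Pi.single i 1) + γstar i * ystar i = 0) ∧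
      (∀ i, ρ * (ystar i - 1) + γstar i * xstar i = 0) ∧
      (∀ j, 0 ≤ lam j) ∧ (∀ j, g xstar j ≤ 0) ∧ (∀ j, lam j * g xstar j = 0) ∧
      (∀ j, h xstar j = 0) ∧ (∀ i, xstar i * ystar i = 0)) := by
  constructor
  · rintro ⟨h1, h2, h3, h4, h5⟩
    refine ⟨fun i => if xstar i = 0 then 1 else 0,
      fun i => if xstar i = 0 then -(fderiv ℝ (LSP f g h lam mu) xstar (Pi.single i 1))
        else ρ / xstar i, fun i => ?_, fun i => ?_, h2, h3, h4, h5, fun i => ?_⟩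
    · by_cases hx : xstar i = 0
      · simp [hx]
      · simp [hx, h1 i hx]
    · by_cases hx : xstar i = 0 <;> simp [hx]
    · by_cases hx : xstar i = 0 <;> simp [hx]
  · rintro ⟨y, γ, k1, k2, k3, k4, k5, k6, k7⟩
    refine ⟨fun i hx => ?_, k3, k4, k5, k6⟩
    have hy : y i = 0 := by
      rcases mul_eq_zero.1 (k7 i) with h' | h' <;> [exact absurd h' hx; exact h']
    have := k1 i
    rw [hy, mul_zero, add_zero] at this
    exact this
end

section
/- Let g, h be continuously differentiable and let x* be feasible (g(x*) ≤ 0, h(x*) = 0) with active index set I_g(x*) = {i : g_i(x*) = 0} and zero set I₀(x*) = {i : x*_i = 0}. Let y* ∈ ℝ^n satisfy x* ∘ y* = 0 and assume no index i has x*_i = y*_i = 0. Then SP-LICQ at x* (linear independence of {∇g_i(x*) : i ∈ I_g(x*)} ∪ {∇h_j(x*) : j = 1,...,p} ∪ {e_i : i ∈ I₀(x*)} in ℝ^n) holds if and only if the gradients of the active constraints of SPOsq at (x*, y*), namely the vectors (∇g_i(x*), 0) for i ∈ I_g(x*), (∇h_j(x*), 0) for all j, and (y*_i e_i, x*_i e_i)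 for i = 1,...,n, are linearly independent in ℝ^{2n}. -/
open Finset

/-- gradient of a scalar function at a point, as a vector in `Fin n → ℝ`. -/
noncomputable def gradAt {n : ℕ} (φ : (Fin n → ℝ) → ℝ) (x : Fin n → ℝ) : Fin n → ℝ :=
  fun j => fderiv ℝ φ x (Pi.single j 1)

private lemma sum_smul_single {n : ℕ} (d : Fin n → ℝ) :
    (∑ i, d i • (Pi.single i 1 : Fin n → ℝ)) = d := by
  funext k
  simp [Finset.sum_apply, Pi.single_apply]

private lemma sum_smul_single_subtype {n : ℕ} (P : Fin n → Prop) [DecidablePred P]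
    (c : {i // P i} → ℝ) :
    (∑ i : {i // P i}, c i • (Pi.single i.1 1 : Fin n → ℝ)) =
    fun k => if hk : P k then c ⟨k, hk⟩ else 0 := by
  funext k
  rw [Finset.sum_apply]
  by_cases hk : P k
  · rw [Finset.sum_eq_single ⟨k, hk⟩]
    · simp [hk]
    · intro i _ hik
      have : i.1 ≠ k := fun hh => hik (Subtype.ext hh)
      simp [Pi.single_apply, this]
    · simp
  · rw [dif_neg hk]
    apply Finset.sum_eq_zero
    intro i _
    have : i.1 ≠ k := fun hh => hk (hh ▸ i.2)
    simp [Pi.single_apply, this]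

theorem stmt14 {n m p : ℕ}
    (g : (Fin n → ℝ) → Fin m → ℝ) (h : (Fin n → ℝ) → Fin p → ℝ)
    (hg : ∀ j, ContDiff ℝ 1 (fun x => g x j))
    (hh : ∀ j, ContDiff ℝ 1 (fun x => h x j))
    (xstar ystar : Fin n → ℝ)
    (hfeas : (∀ j, g xstar j ≤ 0) ∧ (∀ j, h xstar j = 0))
    (hcomp : ∀ i, xstar i * ystar i = 0)
    (hbi : ∀ i, ¬ (xstar i = 0 ∧ ystar i = 0)) :
    (LinearIndependent ℝ
      (fun v : ({j // g xstar j = 0} ⊕ Fin p ⊕ {i // xstar i = 0}) =>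
        Sum.elim (fun j => gradAt (fun x => g x j.1) xstar)
          (Sum.elim (fun j => gradAt (fun x => h x j) xstar)
            (fun i => (Pi.single i.1 1 : Fin n → ℝ))) v)) ↔
    (LinearIndependent ℝ
      (fun v : ({j // g xstar j = 0} ⊕ Fin p ⊕ Fin n) =>
        Sum.elim
          (fun j => ((gradAt (fun x => g x j.1) xstar, 0) : (Fin n → ℝ) × (Fin n → ℝ)))
          (Sum.elim
            (fun j => ((gradAt (fun x => h x j) xstar, 0) : (Fin n → ℝ) × (Fin n → ℝ)))
            (fun i => ((ystar i • (Pi.single i 1 : Fin n → ℝ), xstar i • (Pi.single i 1 : Fin n → ℝ)) :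
              (Fin n → ℝ) × (Fin n → ℝ)))) v)) := by
  classical
  set a : {j // g xstar j = 0} → (Fin n → ℝ) := fun j => gradAt (fun x => g x j.1) xstar with ha
  set b : Fin p → (Fin n → ℝ) := fun j => gradAt (fun x => h x j) xstar with hb
  rw [Fintype.linearIndependent_iff, Fintype.linearIndependent_iff]
  constructor
  · -- SP-LICQ → SPOsq LI
    intro H c hc
    set lam : {j // g xstar j = 0} → ℝ := fun j => c (Sum.inl j)
    set mu : Fin p → ℝ := fun j => c (Sum.inr (Sum.inl j))
    set nu : Fin n → ℝ := fun i => c (Sum.inr (Sum.inr i))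
    have h1 : (∑ j, lam j • a j) + (∑ j, mu j • b j) + (fun k => nu k * ystar k) = 0 := by
      have := congrArg Prod.fst hc
      simpa [Fintype.sum_sum_type, Prod.fst_sum, smul_smul, sum_smul_single,
        add_assoc] using this
    have h2 : ∀ k, nu k * xstar k = 0 := by
      have := congrArg Prod.snd hc
      have h2' : (fun k => nu k * xstar k) = (0 : Fin n → ℝ) := by
        simpa [Fintype.sum_sum_type, Prod.snd_sum, smul_smul, sum_smul_single] using this
      intro k; exact congrFun h2' k
    have hnu0 : ∀ k, xstar k ≠ 0 → nu k = 0 := by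
      intro k hk
      rcases mul_eq_zero.1 (h2 k) with h' | h'
      · exact h'
      · exact absurd h' hk
    -- coefficients for SP-LICQ family
    set c' : ({j // g xstar j = 0} ⊕ Fin p ⊕ {i // xstar i = 0}) → ℝ :=
      Sum.elim lam (Sum.elim mu (fun i => nu i.1 * ystar i.1)) with hc'
    have key : (∑ v, c' v • Sum.elim a (Sum.elim b
        (fun i : {i // xstar i = 0} => (Pi.single i.1 1 : Fin n → ℝ))) v) = 0 := by
      have hthird : (∑ i : {i // xstar i = 0},
          (nu i.1 * ystar i.1) • (Pi.single i.1 1 : Fin n → ℝ)) =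
          (fun k => nu k * ystar k) := by
        rw [sum_smul_single_subtype]
        funext k
        by_cases hk : xstar k = 0
        · simp [hk]
        · simp [hk, hnu0 k hk]
      calc (∑ v, c' v • Sum.elim a (Sum.elim b
            (fun i : {i // xstar i = 0} => (Pi.single i.1 1 : Fin n → ℝ))) v)
          = (∑ j, lam j • a j) + ((∑ j, mu j • b j) + (fun k => nu k * ystar k)) := by
            simp [hc', Fintype.sum_sum_type, hthird]
        _ = 0 := by rw [← add_assoc]; exact h1
    have hall := H c' key
    intro v
    match v with
    | Sum.inl j => exact hall (Sum.inl j)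
    | Sum.inr (Sum.inl j) => exact hall (Sum.inr (Sum.inl j))
    | Sum.inr (Sum.inr i) =>
      by_cases hx : xstar i = 0
      · have hy : ystar i ≠ 0 := fun hy => hbi i ⟨hx, hy⟩
        have := hall (Sum.inr (Sum.inr ⟨i, hx⟩))
        simp only [hc', Sum.elim_inr] at this
        rcases mul_eq_zero.1 this with h' | h'
        · exact h'
        · exact absurd h' hy
      · exact hnu0 i hx
  · -- SPOsq LI → SP-LICQ
    intro H c hc
    set lam : {j // g xstar j = 0} → ℝ := fun j => c (Sum.inl j)
    set mu : Fin p → ℝ := fun j => c (Sum.inr (Sum.inl j))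
    set nu : Fin n → ℝ := fun i =>
      if hx : xstar i = 0 then c (Sum.inr (Sum.inr ⟨i, hx⟩)) / ystar i else 0 with hnu
    have h1 : (∑ j, lam j • a j) + (∑ j, mu j • b j) +
        (fun k => if hk : xstar k = 0 then c (Sum.inr (Sum.inr ⟨k, hk⟩)) else 0) = 0 := by
      simpa [Fintype.sum_sum_type, sum_smul_single_subtype, add_assoc] using hc
    set c' : ({j // g xstar j = 0} ⊕ Fin p ⊕ Fin n) → ℝ :=
      Sum.elim lam (Sum.elim mu nu) with hc'
    have key : (∑ v, c' v • Sum.elim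
        (fun j => ((a j, 0) : (Fin n → ℝ) × (Fin n → ℝ)))
        (Sum.elim (fun j => ((b j, 0) : (Fin n → ℝ) × (Fin n → ℝ)))
          (fun i => ((ystar i • (Pi.single i 1 : Fin n → ℝ),
            xstar i • (Pi.single i 1 : Fin n → ℝ)) : (Fin n → ℝ) × (Fin n → ℝ)))) v) = 0 := by
      have hfst : (fun k => nu k * ystar k) =
          (fun k => if hk : xstar k = 0 then c (Sum.inr (Sum.inr ⟨k, hk⟩)) else 0) := by
        funext k
        by_cases hk : xstar k = 0
        · have hy : ystar k ≠ 0 := fun hy => hbi k ⟨hk, hy⟩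
          simp [hnu, hk, div_mul_cancel₀, hy]
        · simp [hnu, hk]
      have hsnd : (fun k => nu k * xstar k) = (0 : Fin n → ℝ) := by
        funext k
        by_cases hk : xstar k = 0
        · simp [hk]
        · simp [hnu, hk]
      have e1 : (∑ x : Fin n, nu x • ystar x • (Pi.single x 1 : Fin n → ℝ)) =
          fun k => nu k * ystar k := by
        simp only [smul_smul]; exact sum_smul_single _
      have e2 : (∑ x : Fin n, nu x • xstar x • (Pi.single x 1 : Fin n → ℝ)) =
          fun k => nu k * xstar k := by
        simp only [smul_smul]; exact sum_smul_single _
      apply Prod.ext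
      · rw [Prod.fst_sum]
        simp only [hc', Sum.elim_inl, Sum.elim_inr, Fintype.sum_sum_type, smul_zero,
          Prod.smul_mk]
        simp only [e1]
        rw [hfst]
        simpa [add_assoc] using h1
      · rw [Prod.snd_sum]
        simp only [hc', Sum.elim_inl, Sum.elim_inr, Fintype.sum_sum_type, smul_zero,
          Prod.smul_mk]
        simp only [e2]
        simpa using hsnd
    have hall := H c' key
    intro v
    match v with
    | Sum.inl j => exact hall (Sum.inl j)
    | Sum.inr (Sum.inl j) => exact hall (Sum.inr (Sum.inl j))
    | Sum.inr (Sum.inr i) =>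
      have hx : xstar i.1 = 0 := i.2
      have hy : ystar i.1 ≠ 0 := fun hy => hbi i.1 ⟨hx, hy⟩
      have hni := hall (Sum.inr (Sum.inr i.1))
      simp only [hc', Sum.elim_inr, hnu, dif_pos hx] at hni
      have : c (Sum.inr (Sum.inr ⟨i.1, hx⟩)) = 0 := by
        field_simp at hni
        rw [mul_zero] at hni
        exact hni
      simpa using this
end

section
/- Let H ∈ ℝ^{n×n} be symmetric, γ ∈ ℝ^n, ρ > 0, and let S ⊆ {1,...,n}. Suppose dᵀH d > 0 for all nonzero d ∈ ℝ^n with d_i = 0 for i ∈ S. Then for all nonzero pairs (d_x, d_y) ∈ ℝ^n × ℝ^n with (d_x)_i = 0 for i ∈ S and (d_y)_i = 0 for i ∉ S, one has d_xᵀ H d_x + 2 γᵀ(d_x ∘ d_y) + ρ‖d_y‖² > 0. -/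
open Finset Matrix

theorem stmt15 {n : ℕ} (H : Matrix (Fin n) (Fin n) ℝ) (hH : H.IsSymm)
    (γ : Fin n → ℝ) (ρ : ℝ) (hρ : 0 < ρ) (S : Finset (Fin n))
    (hpos : ∀ d : Fin n → ℝ, d ≠ 0 → (∀ i ∈ S, d i = 0) → 0 < d ⬝ᵥ H.mulVec d) :
    ∀ dx dy : Fin n → ℝ, (dx, dy) ≠ 0 → (∀ i ∈ S, dx i = 0) → (∀ i ∉ S, dy i = 0) →
      0 < dx ⬝ᵥ H.mulVec dx + 2 * (∑ i, γ i * (dx i * dy i)) + ρ * ∑ i, dy i ^ 2 := by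
  intro dx dy hne hdx hdy
  have hmid : (∑ i, γ i * (dx i * dy i)) = 0 := by
    apply Finset.sum_eq_zero
    intro i _
    by_cases h : i ∈ S
    · rw [hdx i h]; ring
    · rw [hdy i h]; ring
  rw [hmid]
  have hsq : 0 ≤ ∑ i, dy i ^ 2 := Finset.sum_nonneg fun i _ => sq_nonneg _
  by_cases hx : dx = 0
  · have hy : dy ≠ 0 := by
      intro hy0; exact hne (by simp [hx, hy0, Prod.ext_iff])
    obtain ⟨j, hj⟩ := Function.ne_iff.mp hy
    have h1 : dx ⬝ᵥ H.mulVec dx = 0 := by simp [hx]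
    have h2 : 0 < ∑ i, dy i ^ 2 := by
      have h : dy j ≠ 0 := by simpa using hj
      have hpj : (0:ℝ) < dy j ^ 2 := by positivity
      exact Finset.sum_pos' (fun i _ => sq_nonneg _) ⟨j, Finset.mem_univ j, hpj⟩
    have := mul_pos hρ h2
    rw [h1]; linarith
  · have h1 := hpos dx hx hdx
    have := mul_nonneg hρ.le hsq
    linarith
end

section
/- Fix ρ > 0. Consider the block matrices H = [[M, D_γ, Gᵀ, Hᵀ, D_y], [D_γ, ρI, 0, 0, D_x], [J₁, 0, J₂, 0, 0], [Hh, 0, 0, 0, 0], [D_y, D_x, 0, 0, 0]] and H_red = [[M - D_γ²/ρ, Gᵀ, Hᵀ, D_{e - 2γ∘x/ρ}], [J₁, J₂, 0, 0], [Hh, 0, 0, 0], [D_{e - 2γ∘x/ρ}, 0, 0, -D_x²/ρ]], where D_v = diag(v), y = e - (γ ∘ x)/ρ, and M is symmetric. Then H is nonsingular if and only if H_red is nonsingular. -/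
open Matrix

/-- Generalized Jacobian of the full KKT operator `T` of SPOsq, with
`y = e - (γ ∘ x)/ρ` substituted. Blocks (rows/cols): x, y, λ, μ, γ. -/
noncomputable def bigH {n m p : ℕ} (ρ : ℝ) (M : Matrix (Fin n) (Fin n) ℝ)
    (G : Matrix (Fin m) (Fin n) ℝ) (Hh : Matrix (Fin p) (Fin n) ℝ)
    (J₁ : Matrix (Fin m) (Fin n) ℝ) (j₂ : Fin m → ℝ) (γ x : Fin n → ℝ) :
    Matrix (Fin n ⊕ Fin n ⊕ Fin m ⊕ Fin p ⊕ Fin n)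
           (Fin n ⊕ Fin n ⊕ Fin m ⊕ Fin p ⊕ Fin n) ℝ :=
  fun r c =>
    match r, c with
    | .inl i, .inl j => M i j
    | .inl i, .inr (.inl j) => if i = j then γ i else 0
    | .inl i, .inr (.inr (.inl a)) => G a i
    | .inl i, .inr (.inr (.inr (.inl b))) => Hh b i
    | .inl i, .inr (.inr (.inr (.inr j))) => if i = j then 1 - γ i * x i / ρ else 0
    | .inr (.inl i), .inl j => if i = j then γ i else 0
    | .inr (.inl i), .inr (.inl j) => if i = j then ρ else 0
    | .inr (.inl i), .inr (.inr (.inr (.inr j))) => if i = j then x i else 0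
    | .inr (.inl _), _ => 0
    | .inr (.inr (.inl a)), .inl j => J₁ a j
    | .inr (.inr (.inl a)), .inr (.inr (.inl a')) => if a = a' then j₂ a else 0
    | .inr (.inr (.inl _)), _ => 0
    | .inr (.inr (.inr (.inl b))), .inl j => Hh b j
    | .inr (.inr (.inr (.inl _))), _ => 0
    | .inr (.inr (.inr (.inr i))), .inl j => if i = j then 1 - γ i * x i / ρ else 0
    | .inr (.inr (.inr (.inr i))), .inr (.inl j) => if i = j then x i else 0
    | .inr (.inr (.inr (.inr _))), _ => 0

/-- Generalized Jacobian of the reduced operator `T_red` (y eliminated).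
Blocks (rows/cols): x, λ, μ, γ. -/
noncomputable def redH {n m p : ℕ} (ρ : ℝ) (M : Matrix (Fin n) (Fin n) ℝ)
    (G : Matrix (Fin m) (Fin n) ℝ) (Hh : Matrix (Fin p) (Fin n) ℝ)
    (J₁ : Matrix (Fin m) (Fin n) ℝ) (j₂ : Fin m → ℝ) (γ x : Fin n → ℝ) :
    Matrix (Fin n ⊕ Fin m ⊕ Fin p ⊕ Fin n) (Fin n ⊕ Fin m ⊕ Fin p ⊕ Fin n) ℝ :=
  fun r c =>
    match r, c with
    | .inl i, .inl j => M i j - (if i = j then γ i ^ 2 / ρ else 0)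
    | .inl i, .inr (.inl a) => G a i
    | .inl i, .inr (.inr (.inl b)) => Hh b i
    | .inl i, .inr (.inr (.inr j)) => if i = j then 1 - 2 * γ i * x i / ρ else 0
    | .inr (.inl a), .inl j => J₁ a j
    | .inr (.inl a), .inr (.inl a') => if a = a' then j₂ a else 0
    | .inr (.inl _), _ => 0
    | .inr (.inr (.inl b)), .inl j => Hh b j
    | .inr (.inr (.inl _)), _ => 0
    | .inr (.inr (.inr i)), .inl j => if i = j then 1 - 2 * γ i * x i / ρ else 0
    | .inr (.inr (.inr i)), .inr (.inr (.inr j)) => if i = j then -(x i ^ 2) / ρ else 0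
    | .inr (.inr (.inr _)), _ => 0

set_option maxHeartbeats 2000000 in
theorem stmt17 {n m p : ℕ} (ρ : ℝ) (hρ : 0 < ρ) (M : Matrix (Fin n) (Fin n) ℝ)
    (hM : M.IsSymm) (G : Matrix (Fin m) (Fin n) ℝ) (Hh : Matrix (Fin p) (Fin n) ℝ)
    (J₁ : Matrix (Fin m) (Fin n) ℝ) (j₂ : Fin m → ℝ) (γ x : Fin n → ℝ) :
    (bigH ρ M G Hh J₁ j₂ γ x).det ≠ 0 ↔ (redH ρ M G Hh J₁ j₂ γ x).det ≠ 0 := by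
  rw [Ne, Ne, not_iff_not, ← Matrix.exists_mulVec_eq_zero_iff,
    ← Matrix.exists_mulVec_eq_zero_iff]
  constructor
  · rintro ⟨w, hw0, hw⟩
    have hy : ∀ i, w (.inr (.inl i)) =
        -(γ i * w (.inl i) + x i * w (.inr (.inr (.inr (.inr i))))) / ρ := by
      intro i
      have h2 := congrFun hw (Sum.inr (Sum.inl i))
      simp [bigH, Matrix.mulVec, dotProduct, Fintype.sum_sum_type,
        ite_mul, mul_comm] at h2
      field_simp
      linarith
    refine ⟨fun c => match c with
      | .inl i => w (.inl i)
      | .inr (.inl a) => w (.inr (.inr (.inl a)))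
      | .inr (.inr (.inl b)) => w (.inr (.inr (.inr (.inl b))))
      | .inr (.inr (.inr i)) => w (.inr (.inr (.inr (.inr i)))), ?_, ?_⟩
    · intro h
      apply hw0
      funext c
      match c with
      | .inl i => exact congrFun h (.inl i)
      | .inr (.inl i) =>
        have h1 : w (.inl i) = 0 := congrFun h (.inl i)
        have h2 : w (.inr (.inr (.inr (.inr i)))) = 0 := congrFun h (.inr (.inr (.inr i)))
        simp [hy i, h1, h2]
      | .inr (.inr (.inl a)) => exact congrFun h (.inr (.inl a))
      | .inr (.inr (.inr (.inl b))) => exact congrFun h (.inr (.inr (.inl b)))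
      | .inr (.inr (.inr (.inr i))) => exact congrFun h (.inr (.inr (.inr i)))
    · funext c
      match c with
      | .inl i =>
        have h1 := congrFun hw (Sum.inl i)
        simp [bigH, redH, Matrix.mulVec, dotProduct, Fintype.sum_sum_type, ite_mul] at h1 ⊢
        rw [hy i] at h1
        simp only [sub_mul, Finset.sum_sub_distrib, Finset.sum_ite_eq, Finset.mem_univ, if_true]
        simp only [ite_mul, zero_mul, Finset.sum_ite_eq, Finset.mem_univ, if_true] at h1 ⊢
        field_simp at h1 ⊢
        linear_combination h1
      | .inr (.inl a) =>
        have h1 := congrFun hw (Sum.inr (Sum.inr (Sum.inl a)))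
        simp [bigH, redH, Matrix.mulVec, dotProduct, Fintype.sum_sum_type, ite_mul] at h1 ⊢
        exact h1
      | .inr (.inr (.inl b)) =>
        have h1 := congrFun hw (Sum.inr (Sum.inr (Sum.inr (Sum.inl b))))
        simp [bigH, redH, Matrix.mulVec, dotProduct, Fintype.sum_sum_type, ite_mul] at h1 ⊢
        exact h1
      | .inr (.inr (.inr i)) =>
        have h1 := congrFun hw (Sum.inr (Sum.inr (Sum.inr (Sum.inr i))))
        simp [bigH, redH, Matrix.mulVec, dotProduct, Fintype.sum_sum_type, ite_mul] at h1 ⊢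
        rw [hy i] at h1
        field_simp at h1 ⊢
        linear_combination h1
  · rintro ⟨v, hv0, hv⟩
    refine ⟨Sum.elim (fun i => v (.inl i))
      (Sum.elim (fun i => -(γ i * v (.inl i) + x i * v (.inr (.inr (.inr i)))) / ρ)
        (Sum.elim (fun a => v (.inr (.inl a)))
          (Sum.elim (fun b => v (.inr (.inr (.inl b)))) (fun i => v (.inr (.inr (.inr i))))))),
      ?_, ?_⟩
    · intro h
      apply hv0
      funext c
      match c with
      | .inl i => exact congrFun h (.inl i)
      | .inr (.inl a) => exact congrFun h (.inr (.inr (.inl a)))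
      | .inr (.inr (.inl b)) => exact congrFun h (.inr (.inr (.inr (.inl b))))
      | .inr (.inr (.inr i)) => exact congrFun h (.inr (.inr (.inr (.inr i))))
    · funext r
      match r with
      | .inl i =>
        have h1 := congrFun hv (Sum.inl i)
        simp [bigH, redH, Matrix.mulVec, dotProduct, Fintype.sum_sum_type, ite_mul] at h1 ⊢
        simp only [sub_mul, Finset.sum_sub_distrib, Finset.sum_ite_eq, Finset.mem_univ,
          if_true] at h1
        simp only [ite_mul, zero_mul, Finset.sum_ite_eq, Finset.mem_univ, if_true] at h1 ⊢
        field_simp at h1 ⊢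
        linear_combination h1
      | .inr (.inl i) =>
        simp [bigH, Matrix.mulVec, dotProduct, Fintype.sum_sum_type, ite_mul]
        field_simp
        ring
      | .inr (.inr (.inl a)) =>
        have h1 := congrFun hv (Sum.inr (Sum.inl a))
        simp [bigH, redH, Matrix.mulVec, dotProduct, Fintype.sum_sum_type, ite_mul] at h1 ⊢
        exact h1
      | .inr (.inr (.inr (.inl b))) =>
        have h1 := congrFun hv (Sum.inr (Sum.inr (Sum.inl b)))
        simp [bigH, redH, Matrix.mulVec, dotProduct, Fintype.sum_sum_type, ite_mul] at h1 ⊢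
        exact h1
      | .inr (.inr (.inr (.inr i))) =>
        have h1 := congrFun hv (Sum.inr (Sum.inr (Sum.inr i)))
        simp [bigH, redH, Matrix.mulVec, dotProduct, Fintype.sum_sum_type, ite_mul] at h1 ⊢
        field_simp at h1 ⊢
        linear_combination h1
end

section
/- Let x* be a local minimizer of x ↦ f(x) + ρ‖x‖₀ over X with ρ > 0 and f continuous, and let κ := ‖x*‖₀ and δ := f(x*). Then x* is a global minimizer of f over {x ∈ X : ‖x‖₀ ≤ κ} restricted to a neighborhood of x* (i.e., a local minimizer of the cardinality-constrained problem), and x* is a local minimizer of ‖x‖₀ over {x ∈ X : f(x) ≤ δ}. -/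
open Finset

theorem stmt19 {n : ℕ} (X : Set (Fin n → ℝ)) (f : (Fin n → ℝ) → ℝ)
    (hf : Continuous f) (ρ : ℝ) (hρ : 0 < ρ) (xstar : Fin n → ℝ) (hx : xstar ∈ X)
    (hmin : IsLocalMinOn (fun x => f x + ρ * norm0 x) X xstar)
    (κ : ℝ) (hκ : κ = norm0 xstar) (δ : ℝ) (hδ : δ = f xstar) :
    IsLocalMinOn f {x ∈ X | norm0 x ≤ κ} xstar ∧
    IsLocalMinOn norm0 {x ∈ X | f x ≤ δ} xstar := by
  have key : ∀ s : Set (Fin n → ℝ), s ⊆ X →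
      ∀ᶠ x in nhdsWithin xstar s, f xstar + ρ * norm0 xstar ≤ f x + ρ * norm0 x := by
    intro s hs
    exact hmin.filter_mono (nhdsWithin_mono xstar hs)
  constructor
  · have h := key {x ∈ X | norm0 x ≤ κ} (fun x hx => hx.1)
    filter_upwards [h, self_mem_nhdsWithin] with x h1 h2
    have : norm0 x ≤ norm0 xstar := hκ ▸ h2.2
    nlinarith
  · have h := key {x ∈ X | f x ≤ δ} (fun x hx => hx.1)
    filter_upwards [h, self_mem_nhdsWithin] with x h1 h2
    have : f x ≤ f xstar := hδ ▸ h2.2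
    nlinarith
end
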